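/- For any two welfare functions W' = (𝒯', Q') and W'' = (𝒯'', Q'') with W'(∅) = W''(∅) = 0, and any weight system ω = (λ, Σ): f^{W'}_{GWSV}[ω] = f^{W''}_{GWMC}[ω] (as functions on N × 2^N) if and only if 𝒯' = 𝒯'' and for every T ∈ 𝒯', q'_T = (Σ_{j∈T̄} λ_j) · q''_T. -/

import Mathlib

open scoped BigOperators Classical

namespace CostSharing

/-- A welfare sharing game on player set `N`: a finite resource set, a nonempty
finite action set (a collection of subsets of resources) for each player, and a
local welfare function at each resource. -/
structure Game (N : Type) [Fintype N] [DecidableEq N] where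
  R : Type
  [finR : Fintype R]
  [decR : DecidableEq R]
  act : N → Finset (Finset R)
  act_nonempty : ∀ i, (act i).Nonempty
  Wr : R → Finset N → ℝ

attribute [instance] Game.finR Game.decR

variable {N : Type} [Fintype N] [DecidableEq N]

/-- `{a}_r`: the set of players choosing resource `r` in profile `a`. -/
def playersAt {G : Game N} (a : N → Finset G.R) (r : G.R) : Finset N :=
  Finset.univ.filter fun i => r ∈ a i

/-- Player `i`'s utility, where `fD` assigns to each local welfare function its
local distribution rule (so resources with identical welfare functions have
identical distribution rules). -/
noncomputable def utility (G : Game N) (fD : (Finset N → ℝ) → N → Finset N → ℝ)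
    (a : N → Finset G.R) (i : N) : ℝ :=
  ∑ r ∈ a i, fD (G.Wr r) i (playersAt a r)

/-- Pure Nash equilibrium. -/
def IsPNE (G : Game N) (fD : (Finset N → ℝ) → N → Finset N → ℝ)
    (a : N → Finset G.R) : Prop :=
  (∀ i, a i ∈ G.act i) ∧
    ∀ i : N, ∀ b ∈ G.act i,
      utility G fD (Function.update a i b) i ≤ utility G fD a i

/-- Every game in the class `G(N, f^𝕎, 𝕎)` possesses a pure Nash equilibrium. -/
def GuaranteesPNE (𝕎 : Set (Finset N → ℝ))
    (fD : (Finset N → ℝ) → N → Finset N → ℝ) : Prop :=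
  ∀ G : Game N, (∀ r : G.R, G.Wr r ∈ 𝕎) → ∃ a, IsPNE G fD a

/-- Every game in the single-welfare-function class `G(N, f, W)` possesses a
pure Nash equilibrium. -/
def GuaranteesPNE1 (W : Finset N → ℝ) (f : N → Finset N → ℝ) : Prop :=
  ∀ G : Game N, (∀ r : G.R, G.Wr r = W) → ∃ a, IsPNE G (fun _ => f) a

/-- A distribution rule allocates nothing to absent players. -/
def DistRule (f : N → Finset N → ℝ) : Prop :=
  ∀ (i : N) (S : Finset N), i ∉ S → f i S = 0

/-- Budget balance: `∑_{i∈S} f(i,S) = W(S)`. -/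
def BudgetBalanced (W : Finset N → ℝ) (f : N → Finset N → ℝ) : Prop :=
  ∀ S : Finset N, ∑ i ∈ S, f i S = W S

/-- The inclusion (unanimity) welfare function `W^T`. -/
def unanimity (T S : Finset N) : ℝ := if T ⊆ S then 1 else 0

/-- The basis coefficient `q^W_T` of `W` on the unanimity basis (Möbius inversion). -/
def coeff (W : Finset N → ℝ) (T : Finset N) : ℝ :=
  ∑ R ∈ T.powerset, (-1 : ℝ) ^ (T.card - R.card) * W R

/-- The support `𝒯^W` of the basis representation of `W`. -/
noncomputable def supp (W : Finset N → ℝ) : Finset (Finset N) :=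
  Finset.univ.filter fun T => coeff W T ≠ 0

/-- `𝒯^W(S)`: the contributing coalitions within `S`. -/
noncomputable def suppIn (W : Finset N → ℝ) (S : Finset N) : Finset (Finset N) :=
  (supp W).filter (· ⊆ S)

/-- `N^W(S)`: the contributing players within `S`. -/
noncomputable def contributors (W : Finset N → ℝ) (S : Finset N) : Finset N :=
  (suppIn W S).biUnion id

/-- A weight system `ω = (λ, Σ)`: strictly positive player weights together with
an ordered partition of `N`. -/
structure WeightSystem (N : Type) [Fintype N] [DecidableEq N] where
  lam : N → ℝ
  lam_pos : ∀ i, 0 < lam i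
  m : ℕ
  part : Fin m → Finset N
  part_nonempty : ∀ k, (part k).Nonempty
  part_disjoint : ∀ k l, k ≠ l → Disjoint (part k) (part l)
  part_covers : ∀ i : N, ∃ k, i ∈ part k

/-- The index of the block of the ordered partition containing player `i`. -/
noncomputable def WeightSystem.idx (ω : WeightSystem N) (i : N) : Fin ω.m :=
  (ω.part_covers i).choose

/-- `T̄ = T ∩ S_k` where `k = min {j : S_j ∩ T ≠ ∅}`. -/
noncomputable def WeightSystem.bar (ω : WeightSystem N) (T : Finset N) : Finset N :=
  T.filter fun i => ∀ j ∈ T, ω.idx i ≤ ω.idx j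

/-- The generalized weighted Shapley value basis rule `f^T_{GWSV}[ω]`. -/
noncomputable def fGWSVbasis (ω : WeightSystem N) (T : Finset N) (i : N)
    (S : Finset N) : ℝ :=
  if i ∈ ω.bar T ∧ T ⊆ S then ω.lam i / ∑ j ∈ ω.bar T, ω.lam j else 0

/-- The generalized weighted marginal contribution basis rule `f^T_{GWMC}[ω]`. -/
noncomputable def fGWMCbasis (ω : WeightSystem N) (T : Finset N) (i : N)
    (S : Finset N) : ℝ :=
  if i ∈ ω.bar T ∧ T ⊆ S then ω.lam i else 0

/-- The generalized weighted Shapley value distribution rule `f^{W'}_{GWSV}[ω]`. -/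
noncomputable def fGWSV (ω : WeightSystem N) (W' : Finset N → ℝ) (i : N)
    (S : Finset N) : ℝ :=
  ∑ T ∈ supp W', coeff W' T * fGWSVbasis ω T i S

/-- The generalized weighted marginal contribution distribution rule
`f^{W''}_{GWMC}[ω]`. -/
noncomputable def fGWMC (ω : WeightSystem N) (W'' : Finset N → ℝ) (i : N)
    (S : Finset N) : ℝ :=
  ∑ T ∈ supp W'', coeff W'' T * fGWMCbasis ω T i S

/-- The recursively defined basis distribution rules `f^T` of a distribution
rule `f` for `W` (recursion along the min-partition of `(𝒯^W, ⊆)`). -/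
noncomputable def basisRule (W : Finset N → ℝ) (f : N → Finset N → ℝ)
    (T : Finset N) (i : N) (S : Finset N) : ℝ :=
  if T ⊆ S then
    (1 / coeff W T) *
      (f i T - ∑ T' ∈ ((suppIn W T).erase T).attach,
        coeff W T'.1 * basisRule W f T'.1 i S)
  else 0
termination_by T.card
decreasing_by
  have h := T'.2
  simp only [Finset.mem_erase, suppIn, Finset.mem_filter] at h
  exact Finset.card_lt_card (Finset.ssubset_iff_subset_ne.mpr ⟨h.2.2, h.1⟩)


section Aux

variable {N' : Type} [Fintype N'] [DecidableEq N']

lemma coeff_empty (W : Finset N' → ℝ) : coeff W ∅ = W ∅ := by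
  simp [coeff]

lemma mem_supp {W : Finset N' → ℝ} {T : Finset N'} :
    T ∈ supp W ↔ coeff W T ≠ 0 := by
  simp [supp]

lemma supp_nonempty_mem {W : Finset N' → ℝ} (h : W ∅ = 0) {T : Finset N'}
    (hT : T ∈ supp W) : T.Nonempty := by
  rcases T.eq_empty_or_nonempty with rfl | h'
  · exact absurd (by rw [coeff_empty, h]) (mem_supp.mp hT)
  · exact h'

lemma bar_nonempty (ω : WeightSystem N') {T : Finset N'} (hT : T.Nonempty) :
    (ω.bar T).Nonempty := by
  obtain ⟨i, hi, hmin⟩ := T.exists_min_image ω.idx hT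
  exact ⟨i, Finset.mem_filter.mpr ⟨hi, hmin⟩⟩

lemma lamSum_pos (ω : WeightSystem N') {T : Finset N'} (hT : T.Nonempty) :
    0 < ∑ j ∈ ω.bar T, ω.lam j :=
  Finset.sum_pos (fun j _ => ω.lam_pos j) (bar_nonempty ω hT)

lemma fGWSVbasis_eq (ω : WeightSystem N') (T : Finset N') (i : N')
    (S : Finset N') :
    fGWSVbasis ω T i S = fGWMCbasis ω T i S / ∑ j ∈ ω.bar T, ω.lam j := by
  unfold fGWSVbasis fGWMCbasis
  split <;> simp [div_eq_mul_inv]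

lemma lin_indep (ω : WeightSystem N') (A : Finset (Finset N'))
    (hA : ∀ T ∈ A, T.Nonempty) (c : Finset N' → ℝ)
    (h : ∀ (i : N') (S : Finset N'), ∑ T ∈ A, c T * fGWMCbasis ω T i S = 0) :
    ∀ T ∈ A, c T = 0 := by
  intro T
  induction T using Finset.strongInduction with
  | _ T ih =>
    intro hT
    obtain ⟨i, hi⟩ := bar_nonempty ω (hA T hT)
    have hsum : ∑ T' ∈ A, c T' * fGWMCbasis ω T' i T = c T * ω.lam i := by
      rw [Finset.sum_eq_single T]
      · simp [fGWMCbasis, hi]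
      · intro T' hT' hne
        by_cases hs : T' ⊆ T
        · rw [ih T' (Finset.ssubset_iff_subset_ne.mpr ⟨hs, hne⟩) hT']; ring
        · simp [fGWMCbasis, hs]
      · exact fun h' => absurd hT h'
    have h0 : c T * ω.lam i = 0 := by rw [← hsum]; exact h i T
    rcases mul_eq_zero.mp h0 with h' | h'
    · exact h'
    · exact absurd h' (ω.lam_pos i).ne'

end Aux

/-- **Proposition 2.** For any two welfare functions `W' = (𝒯', Q')` and
`W'' = (𝒯'', Q'')` vanishing on `∅`, and any weight system `ω = (λ, Σ)`:
`f^{W'}_{GWSV}[ω] = f^{W''}_{GWMC}[ω]` iff `𝒯' = 𝒯''` and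
`q'_T = (∑_{j∈T̄} λ_j) · q''_T` for every `T ∈ 𝒯'`. -/
theorem gwsv_gwmc_equiv (N : Type) [Fintype N] [DecidableEq N]
    (ω : WeightSystem N) (W' W'' : Finset N → ℝ)
    (h1 : W' ∅ = 0) (h2 : W'' ∅ = 0) :
    fGWSV ω W' = fGWMC ω W'' ↔
      supp W' = supp W'' ∧
        ∀ T ∈ supp W', coeff W' T = (∑ j ∈ ω.bar T, ω.lam j) * coeff W'' T := by
  set Λ : Finset N → ℝ := fun T => ∑ j ∈ ω.bar T, ω.lam j with hΛdef
  constructor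
  · intro heq
    set A : Finset (Finset N) := supp W' ∪ supp W'' with hAdef
    have hAne : ∀ T ∈ A, T.Nonempty := by
      intro T hT
      rcases Finset.mem_union.mp hT with h | h
      exacts [supp_nonempty_mem h1 h, supp_nonempty_mem h2 h]
    have hc : ∀ T ∈ A, coeff W' T / Λ T - coeff W'' T = 0 := by
      apply lin_indep ω A hAne
      intro i S
      have e1 : ∑ T ∈ A, (coeff W' T / Λ T) * fGWMCbasis ω T i S
          = fGWSV ω W' i S := by
        rw [fGWSV, ← Finset.sum_subset (Finset.subset_union_left :
            supp W' ⊆ A)]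
        · apply Finset.sum_congr rfl
          intro T _
          rw [fGWSVbasis_eq]; ring
        · intro T _ hT
          have : coeff W' T = 0 := by
            by_contra hne; exact hT (mem_supp.mpr hne)
          simp [this]
      have e2 : ∑ T ∈ A, coeff W'' T * fGWMCbasis ω T i S
          = fGWMC ω W'' i S := by
        rw [fGWMC, ← Finset.sum_subset (Finset.subset_union_right :
            supp W'' ⊆ A)]
        intro T _ hT
        have : coeff W'' T = 0 := by
          by_contra hne; exact hT (mem_supp.mpr hne)
        simp [this]
      have : ∑ T ∈ A, (coeff W' T / Λ T - coeff W'' T) * fGWMCbasis ω T i S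
          = fGWSV ω W' i S - fGWMC ω W'' i S := by
        rw [← e1, ← e2, ← Finset.sum_sub_distrib]
        apply Finset.sum_congr rfl
        intro T _; ring
      rw [this, heq, sub_self]
    have key : ∀ T ∈ A, coeff W' T = Λ T * coeff W'' T := by
      intro T hT
      have hΛ : Λ T ≠ 0 := (lamSum_pos ω (hAne T hT)).ne'
      have := hc T hT
      field_simp at this
      linarith [this]
    have hsupp : supp W' = supp W'' := by
      ext T
      simp only [mem_supp]
      constructor
      · intro h
        have hT : T ∈ A := Finset.mem_union_left _ (mem_supp.mpr h)
        have hΛ : Λ T ≠ 0 := (lamSum_pos ω (hAne T hT)).ne'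
        intro h0
        exact h (by rw [key T hT, h0, mul_zero])
      · intro h
        have hT : T ∈ A := Finset.mem_union_right _ (mem_supp.mpr h)
        have hΛ : Λ T ≠ 0 := (lamSum_pos ω (hAne T hT)).ne'
        intro h0
        rw [key T hT] at h0
        exact h (by rcases mul_eq_zero.mp h0 with h' | h' <;>
          [exact absurd h' hΛ; exact h'])
    refine ⟨hsupp, fun T hT => key T (Finset.mem_union_left _ hT)⟩
  · rintro ⟨hsupp, hq⟩
    funext i S
    rw [fGWSV, fGWMC, ← hsupp]
    apply Finset.sum_congr rfl
    intro T hT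
    have hΛ : Λ T ≠ 0 := (lamSum_pos ω (supp_nonempty_mem h1 hT)).ne'
    rw [hq T hT, fGWSVbasis_eq]
    have h' : (∑ j ∈ ω.bar T, ω.lam j) ≠ 0 := hΛ
    field_simp

end CostSharing
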